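/- Let N ≥ 1 and d ≥ 1. Let f_i : ℝ^d → ℝ for i = 1,…,N be twice continuously differentiable functions and y_1,…,y_N ∈ ℝ. Define the mean-squared-error loss L : ℝ^d → ℝ by L(w) = (1/(2N)) Σ_{i=1}^N (f_i(w) − y_i)². Fix w, X ∈ ℝ^d and η > 0, write u_i = d/dt|_{t=0} f_i(w + tX), v_i = d²/dt²|_{t=0} f_i(w + tX), and e_i = f_i(w) − y_i. Assume |v_j| ≤ η |u_j| for every j, and (min_{1 ≤ i ≤ N} |u_i|)² > η · (max_{1 ≤ j ≤ N} |u_j|) · (max_{1 ≤ k ≤ N} |e_k|). Then the second derivative at t = 0 of t ↦ L(w + tX) is strictly positive. -/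

import Mathlib

/-- The sufficient condition defining the locally convex region of Theorem 4:
with `u_i`, `v_i` the first/second directional derivatives of the network
outputs along `X` and `e_i` the residuals, if `|v_j| ≤ η |u_j|` for all `j`
and `(min_i |u_i|)² > η · (max_j |u_j|) · (max_k |e_k|)`, then the second
derivative at `t = 0` of `t ↦ L (w + t X)` is strictly positive. -/
theorem mse_second_derivative_pos_region (N d : ℕ) (hN : 1 ≤ N) (hd : 1 ≤ d)
    (f : Fin N → EuclideanSpace ℝ (Fin d) → ℝ)
    (hf : ∀ i, ContDiff ℝ 2 (f i))
    (y : Fin N → ℝ) (w X : EuclideanSpace ℝ (Fin d))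
    (η : ℝ) (hη : 0 < η)
    (u v e : Fin N → ℝ)
    (hu : ∀ i, u i = deriv (fun t : ℝ => f i (w + t • X)) 0)
    (hv : ∀ i, v i = deriv (deriv (fun t : ℝ => f i (w + t • X))) 0)
    (he : ∀ i, e i = f i w - y i)
    (hratio : ∀ j, |v j| ≤ η * |u j|)
    (hregion :
      (Finset.univ.inf' (Finset.univ_nonempty_iff.mpr ⟨⟨0, hN⟩⟩) fun i => |u i|) ^ 2 >
        η * (Finset.univ.sup' (Finset.univ_nonempty_iff.mpr ⟨⟨0, hN⟩⟩) fun j => |u j|) *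
          (Finset.univ.sup' (Finset.univ_nonempty_iff.mpr ⟨⟨0, hN⟩⟩) fun k => |e k|)) :
    0 < deriv (deriv (fun t : ℝ =>
      (1 / (2 * (N : ℝ))) * ∑ i, (f i (w + t • X) - y i) ^ 2)) 0 := by
  have hne : (Finset.univ : Finset (Fin N)).Nonempty := Finset.univ_nonempty_iff.mpr ⟨⟨0, hN⟩⟩
  set g : Fin N → ℝ → ℝ := fun i t => f i (w + t • X) with hg
  have hgC : ∀ i, ContDiff ℝ 2 (g i) := by
    intro i
    exact (hf i).comp (contDiff_const.add (contDiff_id.smul contDiff_const))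
  have hgd : ∀ i, Differentiable ℝ (g i) := fun i => (hgC i).differentiable (by norm_num)
  have hg'C : ∀ i, ContDiff ℝ 1 (deriv (g i)) := by
    intro i
    have := (hgC i)
    rw [show (2 : WithTop ℕ∞) = 1 + 1 from by norm_num, contDiff_succ_iff_deriv] at this
    exact this.2.2
  have hg'd : ∀ i, Differentiable ℝ (deriv (g i)) :=
    fun i => (hg'C i).differentiable (by norm_num)
  set c : ℝ := 1 / (2 * (N : ℝ)) with hc
  set D : ℝ → ℝ := fun t => c * ∑ i, 2 * (g i t - y i) * deriv (g i) t with hD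
  have hderiv1 : deriv (fun t : ℝ => c * ∑ i, (g i t - y i) ^ 2) = D := by
    funext t
    have h : HasDerivAt (fun t : ℝ => c * ∑ i, (g i t - y i) ^ 2)
        (c * ∑ i, 2 * (g i t - y i) * deriv (g i) t) t := by
      have hsum : HasDerivAt (fun t : ℝ => ∑ i, (g i t - y i) ^ 2)
          (∑ i, 2 * (g i t - y i) * deriv (g i) t) t := by
        apply HasDerivAt.fun_sum
        intro i _
        have := (((hgd i) t).hasDerivAt.sub_const (y i)).fun_pow 2
        simpa using this
      simpa using hsum.const_mul c
    exact h.deriv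
  rw [show (fun t : ℝ => (1 / (2 * (N : ℝ))) * ∑ i, (f i (w + t • X) - y i) ^ 2)
      = (fun t : ℝ => c * ∑ i, (g i t - y i) ^ 2) from rfl, hderiv1]
  have hD0 : HasDerivAt D (c * ∑ i, 2 * (u i * u i + e i * v i)) 0 := by
    have hsum : HasDerivAt (fun t : ℝ => ∑ i, 2 * (g i t - y i) * deriv (g i) t)
        (∑ i, 2 * (u i * u i + e i * v i)) 0 := by
      apply HasDerivAt.fun_sum
      intro i _
      have h1 : HasDerivAt (fun t => 2 * (g i t - y i)) (2 * u i) 0 := by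
        have := (((hgd i) 0).hasDerivAt.sub_const (y i)).const_mul (2 : ℝ)
        simpa [hu i] using this
      have h2 : HasDerivAt (deriv (g i)) (v i) 0 := by
        have := ((hg'd i) 0).hasDerivAt
        rwa [← hv i] at this
      have := h1.mul h2
      have heq : 2 * u i * deriv (g i) 0 + 2 * (g i 0 - y i) * v i
          = 2 * (u i * u i + e i * v i) := by
        have : deriv (g i) 0 = u i := (hu i).symm
        rw [this, he i]
        simp [hg]
        ring
      rw [heq] at this
      exact this
    exact hsum.const_mul c
  rw [hD0.deriv]
  have hcpos : 0 < c := by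
    rw [hc]
    positivity
  apply mul_pos hcpos
  apply Finset.sum_pos _ hne
  intro i _
  have hkey : e i * v i > -(u i * u i) := by
    have h1 : |e i * v i| ≤ η * (Finset.univ.sup' hne fun j => |u j|) *
        (Finset.univ.sup' hne fun k => |e k|) := by
      rw [abs_mul]
      calc |e i| * |v i| ≤ |e i| * (η * |u i|) := by
            exact mul_le_mul_of_nonneg_left (hratio i) (abs_nonneg _)
        _ ≤ (Finset.univ.sup' hne fun k => |e k|) * (η * (Finset.univ.sup' hne fun j => |u j|)) := by
            apply mul_le_mul
            · exact Finset.le_sup' (fun k => |e k|) (Finset.mem_univ i)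
            · exact mul_le_mul_of_nonneg_left (Finset.le_sup' (fun j => |u j|) (Finset.mem_univ i)) hη.le
            · positivity
            · exact (abs_nonneg (e i)).trans (Finset.le_sup' (fun k => |e k|) (Finset.mem_univ i))
        _ = _ := by ring
    have h2 : (Finset.univ.inf' hne fun i => |u i|) ^ 2 ≤ u i * u i := by
      have hle : (Finset.univ.inf' hne fun i => |u i|) ≤ |u i| :=
        Finset.inf'_le (fun i => |u i|) (Finset.mem_univ i)
      have h0 : (0:ℝ) ≤ Finset.univ.inf' hne fun i => |u i| :=
        Finset.le_inf' hne _ fun j _ => abs_nonneg _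
      calc (Finset.univ.inf' hne fun i => |u i|) ^ 2 ≤ |u i| ^ 2 := by
            exact pow_le_pow_left₀ h0 hle 2
        _ = u i * u i := by rw [sq_abs]; ring
    have := (neg_abs_le (e i * v i))
    nlinarith [hregion]
  nlinarith
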